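/- arXiv:2403.13939 — 5 statements merged into one kernel-verified Lean document; each statement's English description precedes it below -/
import Mathlib

section
/- If R is an integral domain, then an R-module M is torsion free if and only if M is regular fusible. -/
/-- `m` is a torsion element of the `R`-module `M`. -/
def IsTorsionElt (R M : Type*) [CommRing R] [AddCommGroup M] [Module R M] (m : M) : Prop :=
  ∃ r : R, r ≠ 0 ∧ r • m = 0

/-- `m` is a torsion-free element of the `R`-module `M` (`ann_R(m) = 0`). -/
def IsTorsionFreeElt (R M : Type*) [CommRing R] [AddCommGroup M] [Module R M] (m : M) : Prop :=
  ∀ r : R, r • m = 0 → r = 0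

/-- `r ∈ Zd(M)`: `r` is a zero divisor of the `R`-module `M`. -/
def IsZdElt (R M : Type*) [CommRing R] [AddCommGroup M] [Module R M] (r : R) : Prop :=
  ∃ m : M, m ≠ 0 ∧ r • m = 0

/-- `m` is fusible: it is the sum of a torsion and a torsion-free element. -/
def FusibleElt (R M : Type*) [CommRing R] [AddCommGroup M] [Module R M] (m : M) : Prop :=
  ∃ x y : M, IsTorsionElt R M x ∧ IsTorsionFreeElt R M y ∧ m = x + y

/-- `M` is a fusible `R`-module. -/
def FusibleModule (R M : Type*) [CommRing R] [AddCommGroup M] [Module R M] : Prop :=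
  ∀ m : M, m ≠ 0 → FusibleElt R M m

/-- `M` is a regular fusible `R`-module. -/
def RegularFusibleModule (R M : Type*) [CommRing R] [AddCommGroup M] [Module R M] : Prop :=
  ∀ m : M, m ≠ 0 → ∃ r : R, ¬ IsZdElt R M r ∧ FusibleElt R M (r • m)

/-- Over an integral domain, `M` is torsion free iff `M` is regular fusible. -/
theorem torsionFree_iff_regularFusible_of_isDomain (R M : Type*) [CommRing R] [IsDomain R]
    [AddCommGroup M] [Module R M] :
    (∀ m : M, IsTorsionElt R M m → m = 0) ↔ RegularFusibleModule R M := by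
  constructor
  · intro htf m hm
    refine ⟨1, ?_, 0, m, ⟨1, one_ne_zero, smul_zero 1⟩, ?_, by simp⟩
    · rintro ⟨n, hn, hn0⟩
      exact hn (by simpa using hn0)
    · intro r hr
      by_contra hr0
      exact hm (htf m ⟨r, hr0, by simpa using hr⟩)
  · intro hrf m hm
    by_contra hm0
    obtain ⟨s, hs, hsm⟩ := hm
    obtain ⟨r, hnzd, x, y, ⟨t, ht, htx⟩, hy, hsum⟩ := hrf m hm0
    have h1 : (t * s) • y = 0 := by
      have h2 : s • (r • m) = 0 := by
        rw [smul_comm, hsm, smul_zero]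
      have h3 : t • (s • x + s • y) = 0 := by
        rw [← smul_add, ← hsum, h2, smul_zero]
      calc (t * s) • y = t • (s • x) + t • (s • y) := by
            rw [mul_smul, smul_comm t s x, htx, smul_zero, zero_add]
          _ = 0 := by rw [← smul_add]; exact h3
    exact ht (by rcases mul_eq_zero.mp (hy _ h1) with h | h
                 · exact h
                 · exact absurd h hs)
end

section
/- For an integral domain R and an R-module M, the following are equivalent: (i) M is fusible; (ii) M is regular fusible; (iii) M is nonsingular; (iv) M is torsion free. -/
/-- `m` is a singular element: `ann_R(m)` is an essential ideal of `R`. -/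
def IsSingularElt (R M : Type*) [CommRing R] [AddCommGroup M] [Module R M] (m : M) : Prop :=
  ∀ J : Ideal R, J ≠ ⊥ → ∃ x : R, x ≠ 0 ∧ x ∈ J ∧ x • m = 0

/-- Over an integral domain the notions fusible, regular fusible, nonsingular and
torsion free coincide. -/
theorem fusible_tfae_of_isDomain (R M : Type*) [CommRing R] [IsDomain R]
    [AddCommGroup M] [Module R M] :
    List.TFAE [FusibleModule R M,
      RegularFusibleModule R M,
      ∀ m : M, IsSingularElt R M m → m = 0,
      ∀ m : M, IsTorsionElt R M m → m = 0] := by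
  tfae_have 1 → 2 := by
    intro h m hm
    exact ⟨1, fun ⟨x, hx, hx1⟩ => hx (by simpa using hx1), by simpa using h m hm⟩
  tfae_have 2 → 4 := by
    intro h m ⟨r, hr, hrm⟩
    by_contra hm
    obtain ⟨s, -, x, y, ⟨t, ht, htx⟩, hy, hxy⟩ := h m hm
    have h1 : (t * r) • y = 0 := by
      have : r • (s • m) = 0 := by rw [smul_comm, hrm, smul_zero]
      rw [hxy] at this
      have h2 : r • x + r • y = 0 := by rwa [smul_add] at this
      have : t • (r • x + r • y) = 0 := by rw [h2, smul_zero]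
      rw [smul_add, smul_comm t r x, htx, smul_zero, zero_add, smul_smul] at this
      exact this
    exact hr (by simpa [ht] using mul_eq_zero.mp (hy _ h1))
  tfae_have 4 → 3 := by
    intro h m hs
    obtain ⟨x, hx, -, hxm⟩ := hs ⊤ (by simp)
    exact h m ⟨x, hx, hxm⟩
  tfae_have 3 → 4 := by
    intro h m ⟨r, hr, hrm⟩
    refine h m (fun J hJ => ?_)
    obtain ⟨b, hbJ, hb⟩ := Submodule.exists_mem_ne_zero_of_ne_bot hJ
    exact ⟨b * r, mul_ne_zero hb hr, J.mul_mem_right r hbJ, by rw [mul_smul, hrm, smul_zero]⟩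
  tfae_have 4 → 1 := by
    intro h m hm
    refine ⟨0, m, ⟨1, one_ne_zero, smul_zero 1⟩, fun r hr => ?_, (zero_add m).symm⟩
    by_contra hr0
    exact hm (h m ⟨r, hr0, hr⟩)
  tfae_finish
end

section
/- Let R be a commutative ring, M a regular fusible R-module, and S a multiplicatively closed subset of R consisting of regular elements of R. Then S⁻¹M is a regular fusible S⁻¹R-module. -/
lemma mk_eq_zero_iff' {R M : Type*} [CommRing R] [AddCommGroup M] [Module R M]
    {S : Submonoid R} (m : M) (s : S) :
    LocalizedModule.mk m s = 0 ↔ ∃ t : S, (t : R) • m = 0 := by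
  rw [← LocalizedModule.zero_mk (1 : S), LocalizedModule.mk_eq]
  constructor
  · rintro ⟨u, hu⟩
    refine ⟨u, ?_⟩
    simpa [Submonoid.smul_def] using hu
  · rintro ⟨t, ht⟩
    exact ⟨t, by simpa [Submonoid.smul_def] using ht⟩

lemma locmk_eq_zero_iff' {R : Type*} [CommRing R] {S : Submonoid R} (r : R) (s : S) :
    Localization.mk r s = 0 ↔ ∃ t : S, (t : R) * r = 0 := by
  rw [← Localization.mk_zero (1 : S), Localization.mk_eq_mk_iff, Localization.r_iff_exists]
  constructor
  · rintro ⟨c, hc⟩; exact ⟨c, by simpa using hc⟩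
  · rintro ⟨t, ht⟩; exact ⟨t, by simpa using ht⟩

/-- If `M` is regular fusible and `S` consists of regular elements of `R`,
then `S⁻¹M` is a regular fusible `S⁻¹R`-module. -/
theorem regularFusible_localization (R M : Type*) [CommRing R] [AddCommGroup M]
    [Module R M] (S : Submonoid R) (hS : ∀ s ∈ S, s ∈ nonZeroDivisors R)
    (h : RegularFusibleModule R M) :
    RegularFusibleModule (Localization S) (LocalizedModule S M) := by
  intro z hz
  induction z using LocalizedModule.induction_on with
  | _ m s =>
  have hm : m ≠ 0 := by
    rintro rfl
    exact hz (LocalizedModule.zero_mk s)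
  obtain ⟨r, hr, x, y, ⟨a, ha, hax⟩, hy, hxy⟩ := h m hm
  refine ⟨Localization.mk r 1, ?_, LocalizedModule.mk x s, LocalizedModule.mk y s,
    ⟨Localization.mk a 1, ?_, ?_⟩, ?_, ?_⟩
  · rintro ⟨n, hn, hrn⟩
    induction n using LocalizedModule.induction_on with
    | _ n u =>
    rw [LocalizedModule.mk_smul_mk, mk_eq_zero_iff'] at hrn
    obtain ⟨t, ht⟩ := hrn
    rw [← mul_smul, mul_comm, mul_smul] at ht
    by_cases htn : (t : R) • n = 0
    · exact hn ((mk_eq_zero_iff' n u).2 ⟨t, htn⟩)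
    · exact hr ⟨(t : R) • n, htn, ht⟩
  · intro h0
    rw [locmk_eq_zero_iff'] at h0
    obtain ⟨t, ht⟩ := h0
    exact ha ((hS t t.2).2 a (by rwa [mul_comm] at ht))
  · rw [LocalizedModule.mk_smul_mk, mk_eq_zero_iff']
    exact ⟨1, by simp [hax]⟩
  · intro c hc
    induction c using Localization.induction_on with
    | _ p =>
    obtain ⟨b, u⟩ := p
    rw [LocalizedModule.mk_smul_mk, mk_eq_zero_iff'] at hc
    obtain ⟨t, ht⟩ := hc
    rw [← mul_smul] at ht
    have hb : (t : R) * b = 0 := hy _ ht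
    have : b = 0 := (hS t t.2).2 b (by rwa [mul_comm] at hb)
    rw [locmk_eq_zero_iff']
    exact ⟨1, by simp [this]⟩
  · rw [LocalizedModule.mk_smul_mk, one_mul, hxy, LocalizedModule.mk_add_mk,
      LocalizedModule.mk_eq]
    exact ⟨1, by simp only [one_smul, mul_smul, smul_add]⟩
end

section
/- Let R be a commutative ring, M a faithful R-module, and S a multiplicatively closed subset with S ⊆ R − Zd(M). If S⁻¹M is a regular fusible S⁻¹R-module, then M is a regular fusible R-module. -/
private lemma nonZd_mul {R M : Type*} [CommRing R] [AddCommGroup M] [Module R M]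
    {a b : R} (ha : ¬ IsZdElt R M a) (hb : ¬ IsZdElt R M b) : ¬ IsZdElt R M (a * b) := by
  rintro ⟨m, hm, hab⟩
  rw [mul_smul] at hab
  by_cases hbm : b • m = 0
  · exact hb ⟨m, hm, hbm⟩
  · exact ha ⟨b • m, hbm, hab⟩

/-- If `M` is faithful, `S ⊆ R − Zd(M)` and `S⁻¹M` is regular fusible over `S⁻¹R`,
then `M` is a regular fusible `R`-module. -/
theorem regularFusible_of_localization (R M : Type*) [CommRing R] [AddCommGroup M]
    [Module R M] (hfaith : ∀ r : R, (∀ m : M, r • m = 0) → r = 0)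
    (S : Submonoid R) (hS : ∀ s ∈ S, ¬ IsZdElt R M s)
    (h : RegularFusibleModule (Localization S) (LocalizedModule S M)) :
    RegularFusibleModule R M := by
  have mkM_zero : ∀ (z : M) (w : S), (LocalizedModule.mk z w : LocalizedModule S M) = 0 →
      ∃ c : S, (c : R) • z = 0 := by
    intro z w h0
    rw [← LocalizedModule.zero_mk (1 : S)] at h0
    obtain ⟨c, hc⟩ := LocalizedModule.mk_eq.mp h0
    refine ⟨c, ?_⟩
    simpa [Submonoid.smul_def] using hc
  have mkM_ne : ∀ (z : M), z ≠ 0 → (LocalizedModule.mk z (1 : S) : LocalizedModule S M) ≠ 0 := by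
    intro z hz h0
    obtain ⟨c, hc⟩ := mkM_zero z 1 h0
    exact hS c c.2 ⟨z, hz, hc⟩
  have mkR_zero : ∀ (b : R) (w : S), (Localization.mk b w : Localization S) = 0 →
      ∃ c : S, (c : R) * b = 0 := by
    intro b w h0
    rw [← Localization.mk_zero (1 : S)] at h0
    obtain ⟨c, hc⟩ := Localization.r_iff_exists.mp (Localization.mk_eq_mk_iff.mp h0)
    refine ⟨c, ?_⟩
    simpa using hc
  have cancel : ∀ (b w : R), ¬ IsZdElt R M w → b * w = 0 → b = 0 := by
    intro b w hw hbw
    refine hfaith b fun m0 => ?_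
    by_contra hbm
    exact hw ⟨b • m0, hbm, by rw [smul_smul, mul_comm, hbw, zero_smul]⟩
  intro m hm
  obtain ⟨ρ, hρ, F⟩ := h (LocalizedModule.mk m 1) (mkM_ne m hm)
  obtain ⟨⟨r, s⟩, rfl⟩ : ∃ p : R × S, ρ = Localization.mk p.1 p.2 :=
    Localization.induction_on ρ fun p => ⟨p, rfl⟩
  obtain ⟨X, Y, hX, hY, heq⟩ := F
  obtain ⟨x, u, rfl⟩ : ∃ (x : M) (u : S), X = LocalizedModule.mk x u :=
    LocalizedModule.induction_on (fun x u => ⟨x, u, rfl⟩) X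
  obtain ⟨y, v, rfl⟩ : ∃ (y : M) (v : S), Y = LocalizedModule.mk y v :=
    LocalizedModule.induction_on (fun y v => ⟨y, v, rfl⟩) Y
  -- torsion data for `x`
  obtain ⟨A, hA0, hAx⟩ := hX
  obtain ⟨⟨a, t⟩, rfl⟩ : ∃ p : R × S, A = Localization.mk p.1 p.2 :=
    Localization.induction_on A fun p => ⟨p, rfl⟩
  rw [LocalizedModule.mk_smul_mk] at hAx
  obtain ⟨c₂, hc₂⟩ := mkM_zero _ _ hAx
  have hb0 : (c₂ : R) * a ≠ 0 := by
    intro hba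
    refine hA0 ?_
    rw [← Localization.mk_zero (1 : S), Localization.mk_eq_mk_iff, Localization.r_iff_exists]
    exact ⟨c₂, by simpa using hba⟩
  have hbx : ((c₂ : R) * a) • x = 0 := by rw [mul_smul]; exact hc₂
  -- `y` is torsion-free in `M`
  have hytf : IsTorsionFreeElt R M y := by
    intro b hb
    have h1 : (Localization.mk b (1 : S)) • (LocalizedModule.mk y v : LocalizedModule S M) = 0 := by
      rw [LocalizedModule.mk_smul_mk, hb, LocalizedModule.zero_mk]
    obtain ⟨c, hc⟩ := mkR_zero b 1 (hY _ h1)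
    exact cancel b c (hS c c.2) (by rw [mul_comm]; exact hc)
  -- `r` is not a zero divisor on `M`
  have hrnzd : ¬ IsZdElt R M r := by
    rintro ⟨m0, hm0, hr0⟩
    exact hρ ⟨LocalizedModule.mk m0 1, mkM_ne m0 hm0, by
      rw [LocalizedModule.mk_smul_mk, hr0, LocalizedModule.zero_mk]⟩
  -- main equation
  rw [LocalizedModule.mk_smul_mk, LocalizedModule.mk_add_mk] at heq
  obtain ⟨c, hc⟩ := LocalizedModule.mk_eq.mp heq
  refine ⟨(c : R) * u * v * r,
    nonZd_mul (nonZd_mul (nonZd_mul (hS c c.2) (hS u u.2)) (hS v v.2)) hrnzd,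
    ((c : R) * s * v) • x, ((c : R) * s * u) • y,
    ⟨(c₂ : R) * a, hb0, by rw [smul_comm, hbx, smul_zero]⟩, ?_, ?_⟩
  · intro b hb
    rw [smul_smul] at hb
    have hb' : (b * ((c : R) * ((s : R) * (u : R)))) • y = 0 := by
      rw [show (b * ((c : R) * ((s : R) * (u : R)))) = b * ((c : R) * s * u) by ring]
      exact hb
    exact cancel b _ (nonZd_mul (hS c c.2) (nonZd_mul (hS s s.2) (hS u u.2))) (hytf _ hb')
  · have e1 : ((c : R) * u * v * r) • m = c • (u * v) • (r • m) := by
      simp only [Submonoid.smul_def, Submonoid.coe_mul, smul_smul]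
      congr 1; ring
    have e2 : c • (s * 1) • ((v : S) • x + (u : S) • y)
        = ((c : R) * s * v) • x + ((c : R) * s * u) • y := by
      simp only [Submonoid.smul_def, Submonoid.coe_mul, OneMemClass.coe_one, mul_one,
        smul_add, smul_smul]
      module
    rw [e1, hc, e2]
end

section
/- Let M be a faithful module over a commutative ring R and let S = R − Zd(M). Then M is a regular fusible R-module if and only if S⁻¹M is a fusible S⁻¹R-module, if and only if S⁻¹M is a regular fusible S⁻¹R-module. -/
/-- For a faithful module `M` over a commutative ring `R` and `S = R − Zd(M)`:
`M` is regular fusible iff `S⁻¹M` is a fusible `S⁻¹R`-module iff `S⁻¹M` is a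
regular fusible `S⁻¹R`-module. -/
theorem regularFusible_iff_totalQuotient_fusible (R M : Type*) [CommRing R] [AddCommGroup M]
    [Module R M] (hfaith : ∀ r : R, (∀ m : M, r • m = 0) → r = 0)
    (S : Submonoid R) (hS : ∀ r : R, r ∈ S ↔ ¬ IsZdElt R M r) :
    (RegularFusibleModule R M ↔ FusibleModule (Localization S) (LocalizedModule S M)) ∧
    (FusibleModule (Localization S) (LocalizedModule S M) ↔
      RegularFusibleModule (Localization S) (LocalizedModule S M)) := by
  -- elements of `S` act injectively on `M`
  have hinj : ∀ s : S, ∀ m : M, (s : R) • m = 0 → m = 0 := by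
    intro s m hm
    by_contra h
    exact (hS s).mp s.2 ⟨m, h, hm⟩
  -- elements of `S` are regular in `R`
  have hreg : ∀ s : S, ∀ a : R, (s : R) * a = 0 → a = 0 := by
    intro s a h
    refine hfaith a fun m => hinj s (a • m) ?_
    rw [← mul_smul, h, zero_smul]
  -- vanishing criterion in the localized module
  have lmk0 : ∀ (m : M) (s : S), LocalizedModule.mk m s = 0 ↔ m = 0 := by
    intro m s
    constructor
    · intro h
      rw [← LocalizedModule.zero_mk (1 : S), LocalizedModule.mk_eq] at h
      obtain ⟨u, hu⟩ := h
      simp only [smul_zero, one_smul] at hu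
      exact hinj u m hu
    · rintro rfl; exact LocalizedModule.zero_mk s
  -- vanishing criterion in the localized ring
  have lzero : ∀ (a : R) (s : S), Localization.mk a s = 0 ↔ a = 0 := by
    intro a s
    constructor
    · intro h
      rw [← Localization.mk_zero s, Localization.mk_eq_mk_iff, Localization.r_iff_exists] at h
      obtain ⟨c, hc⟩ := h
      simp only [mul_zero] at hc
      rw [← mul_assoc, ← Submonoid.coe_mul] at hc
      exact hreg (c * s) a hc
    · rintro rfl; exact Localization.mk_zero s
  -- torsion elements of M give torsion elements of S⁻¹M
  have torsS : ∀ (x : M) (s : S), IsTorsionElt R M x →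
      IsTorsionElt (Localization S) (LocalizedModule S M) (LocalizedModule.mk x s) := by
    rintro x s ⟨a, ha, hax⟩
    refine ⟨Localization.mk a 1, fun h => ha ((lzero a 1).mp h), ?_⟩
    rw [LocalizedModule.mk_smul_mk, hax, LocalizedModule.zero_mk]
  -- torsion-free elements of M give torsion-free elements of S⁻¹M
  have tfS : ∀ (y : M) (s : S), IsTorsionFreeElt R M y →
      IsTorsionFreeElt (Localization S) (LocalizedModule S M) (LocalizedModule.mk y s) := by
    intro y s hy ρ hρ
    induction ρ using Localization.induction_on with
    | H p =>
      obtain ⟨b, t⟩ := p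
      rw [LocalizedModule.mk_smul_mk, lmk0] at hρ
      rw [lzero]
      exact hy b hρ
  -- torsion in S⁻¹M pulls back
  have torsP : ∀ (x : M) (s : S),
      IsTorsionElt (Localization S) (LocalizedModule S M) (LocalizedModule.mk x s) →
      IsTorsionElt R M x := by
    rintro x s ⟨ρ, hρ, hρx⟩
    induction ρ using Localization.induction_on with
    | H p =>
      obtain ⟨a, v⟩ := p
      have ha : a ≠ 0 := fun h => hρ (by rw [h]; exact Localization.mk_zero v)
      rw [LocalizedModule.mk_smul_mk, ← LocalizedModule.zero_mk (1 : S),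
        LocalizedModule.mk_eq] at hρx
      obtain ⟨w, hw⟩ := hρx
      simp only [smul_zero, one_smul] at hw
      refine ⟨(w : R) * a, fun h => ha (hreg w a h), ?_⟩
      rw [mul_smul]
      exact hw
  -- torsion-freeness in S⁻¹M pulls back
  have tfP : ∀ (y : M) (t : S),
      IsTorsionFreeElt (Localization S) (LocalizedModule S M) (LocalizedModule.mk y t) →
      IsTorsionFreeElt R M y := by
    intro y t hy c hc
    have := hy (Localization.mk c 1) (by rw [LocalizedModule.mk_smul_mk, hc,
      LocalizedModule.zero_mk])
    exact (lzero c 1).mp this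
  have exrep : ∀ X : LocalizedModule S M, ∃ (x : M) (s : S), X = LocalizedModule.mk x s :=
    fun X => LocalizedModule.induction_on (fun x s => ⟨x, s, rfl⟩) X
  constructor
  · constructor
    · -- RegularFusibleModule R M → FusibleModule (Localization S) (LocalizedModule S M)
      intro hRF ξ hξ
      obtain ⟨m, s, rfl⟩ := exrep ξ
      have hm : m ≠ 0 := fun h => hξ (by rw [h]; exact LocalizedModule.zero_mk s)
      obtain ⟨r, hr, x, y, hx, hy, hxy⟩ := hRF m hm
      have hrS : r ∈ S := (hS r).mpr hr
      set rs : S := ⟨r, hrS⟩ * s with hrs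
      refine ⟨LocalizedModule.mk x rs, LocalizedModule.mk y rs,
        torsS x rs hx, tfS y rs hy, ?_⟩
      rw [LocalizedModule.mk_add_mk, LocalizedModule.mk_eq]
      refine ⟨1, ?_⟩
      have : (rs : R) • x + (rs : R) • y = (rs : R) • (r • m) := by
        rw [← smul_add, ← hxy]
      simp only [Submonoid.smul_def, one_smul]
      rw [this]
      simp only [Submonoid.coe_mul, ← mul_smul]
      congr 1
      simp only [hrs, Submonoid.coe_mul]
      ring
    · -- FusibleModule loc → RegularFusibleModule R M
      intro hF m hm
      have hm1 : LocalizedModule.mk m (1 : S) ≠ 0 := fun h => hm ((lmk0 m 1).mp h)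
      obtain ⟨X, Y, hX, hY, hXY⟩ := hF _ hm1
      obtain ⟨x, s, rfl⟩ := exrep X
      obtain ⟨y, t, rfl⟩ := exrep Y
      rw [LocalizedModule.mk_add_mk, LocalizedModule.mk_eq] at hXY
      obtain ⟨u, hu⟩ := hXY
      simp only [one_smul, Submonoid.smul_def, Submonoid.coe_mul, smul_add] at hu
      refine ⟨(u : R) * ((s : R) * (t : R)), (hS _).mp (by
        have : (u : R) * ((s : R) * (t : R)) = ((u * (s * t) : S) : R) := by
          simp [Submonoid.coe_mul]
        rw [this]; exact (u * (s * t)).2), ?_⟩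
      refine ⟨(u : R) • (t : R) • x, (u : R) • (s : R) • y, ?_, ?_, ?_⟩
      · obtain ⟨a, ha, hax⟩ := torsP x s hX
        exact ⟨a, ha, by rw [smul_comm a, smul_comm a, hax, smul_zero, smul_zero]⟩
      · intro c hc
        have h1 : (c * ((u : R) * (s : R))) • y = 0 := by
          rw [mul_smul, mul_smul]
          exact hc
        have h2 : IsTorsionFreeElt R M y := tfP y t hY
        have h3 : c * ((u : R) * (s : R)) = 0 := h2 _ h1
        have h4 : ((u * s : S) : R) * c = 0 := by
          rw [Submonoid.coe_mul]
          linear_combination h3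
        exact hreg (u * s) c h4
      · rw [mul_smul]
        exact hu
  · constructor
    · -- Fusible → RegularFusible (always true)
      intro hF m hm
      refine ⟨1, ?_, by rw [one_smul]; exact hF m hm⟩
      rintro ⟨n, hn, h1⟩
      rw [one_smul] at h1
      exact hn h1
    · -- RegularFusible loc → Fusible loc
      intro hRF ξ hξ
      obtain ⟨ρ, hρ, x, y, hx, hy, hxy⟩ := hRF ξ hξ
      induction ρ using Localization.induction_on with
      | H p =>
        obtain ⟨a, v⟩ := p
        have haS : a ∈ S := by
          rw [hS]
          intro ⟨n, hn, han⟩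
          refine hρ ⟨LocalizedModule.mk n 1, fun h => hn ((lmk0 n 1).mp h), ?_⟩
          rw [LocalizedModule.mk_smul_mk, han, LocalizedModule.zero_mk]
        set σ : Localization S := Localization.mk (v : R) ⟨a, haS⟩ with hσ
        have hunit : σ * Localization.mk a v = 1 := by
          rw [hσ, Localization.mk_mul, mul_comm (v : R) a]
          have := Localization.mk_self (M := R) (S := S) (⟨a, haS⟩ * v)
          simpa using this
        refine ⟨σ • x, σ • y, ?_, ?_, ?_⟩
        · obtain ⟨b, hb, hbx⟩ := hx
          exact ⟨b, hb, by rw [smul_comm, hbx, smul_zero]⟩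
        · intro c hc
          have key : c • y = Localization.mk a v • (c • σ • y) := by
            rw [← mul_smul, ← mul_smul]
            congr 1
            rw [mul_comm (Localization.mk a v) c, mul_assoc, mul_comm (Localization.mk a v) σ, hunit,
              mul_one]
          rw [hc, smul_zero] at key
          exact hy c key
        · calc ξ = (σ * Localization.mk a v) • ξ := by rw [hunit, one_smul]
            _ = σ • (Localization.mk a v • ξ) := mul_smul _ _ _
            _ = σ • x + σ • y := by rw [hxy, smul_add]
end
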